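/- Dobinski's formula: for every natural number n, the quantity e^{-1} ∑_{k=0}^∞ k^n / k! equals the number of partitions of a set with n elements (equivalently, the n-th moment of a Poisson distribution with parameter 1 equals the n-th Bell number counting set partitions). -/

import Mathlib

open Real

open Finset in
private lemma dobinski_shift_term_eq (n k : ℕ) :
    ((k + 1 : ℕ) : ℝ) ^ (n + 1) / (Nat.factorial (k + 1) : ℝ)
      = ∑ i ∈ range (n + 1), (n.choose i : ℝ) * ((k : ℝ) ^ i / (Nat.factorial k : ℝ)) := by
  push_cast
  rw [Nat.factorial_succ, pow_succ]
  push_cast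
  rw [mul_comm ((k : ℝ) + 1) (Nat.factorial k : ℝ),
    mul_div_mul_right _ _ (by positivity : (k : ℝ) + 1 ≠ 0),
    add_pow]
  simp [Finset.sum_div, mul_div_assoc]
  exact Finset.sum_congr rfl fun i _ => by ring

open Finset in
private lemma dobinski_summable_moment (n : ℕ) :
    Summable (fun k : ℕ => (k : ℝ) ^ n / (Nat.factorial k : ℝ)) := by
  induction n using Nat.strong_induction_on with
  | _ n ih =>
    match n with
    | 0 => simpa using Real.summable_pow_div_factorial 1
    | (m + 1) =>
      rw [← summable_nat_add_iff 1]
      have h : (fun k : ℕ => ((k + 1 : ℕ) : ℝ) ^ (m + 1) / (Nat.factorial (k + 1) : ℝ))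
          = fun k : ℕ => ∑ i ∈ range (m + 1),
              (m.choose i : ℝ) * ((k : ℝ) ^ i / (Nat.factorial k : ℝ)) :=
        funext (dobinski_shift_term_eq m)
      simp only [Nat.cast_add, Nat.cast_one] at h ⊢
      rw [h]
      exact summable_sum fun i hi => (ih i (mem_range.mp hi)).mul_left _

open Finset in
private lemma dobinski_moment_shift (n : ℕ) :
    ∑' k : ℕ, (k : ℝ) ^ (n + 1) / (Nat.factorial k : ℝ)
      = ∑ i ∈ range (n + 1), (n.choose i : ℝ) * ∑' k : ℕ, (k : ℝ) ^ i / (Nat.factorial k : ℝ) := by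
  rw [Summable.tsum_eq_zero_add (dobinski_summable_moment (n + 1))]
  simp only [Nat.cast_zero, zero_pow (Nat.succ_ne_zero n), Nat.factorial_zero, Nat.cast_one,
    zero_div, zero_add]
  have h : ∀ k : ℕ, ((k + 1 : ℕ) : ℝ) ^ (n + 1) / (Nat.factorial (k + 1) : ℝ)
      = ∑ i ∈ range (n + 1), (n.choose i : ℝ) * ((k : ℝ) ^ i / (Nat.factorial k : ℝ)) := by
    intro k
    exact dobinski_shift_term_eq n k
  rw [tsum_congr h, Summable.tsum_finsetSum
    (fun i _ => ((dobinski_summable_moment i).mul_left ((n.choose i : ℝ))))]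
  exact Finset.sum_congr rfl fun i _ => by
    rw [tsum_mul_left]

/-- Setoids transport along equivalences. -/
private def dobinskiSetoidCongr {α β : Type*} (e : α ≃ β) : Setoid α ≃ Setoid β where
  toFun t := Setoid.comap e.symm t
  invFun t := Setoid.comap e t
  left_inv t := by ext a b; simp [Setoid.comap_rel]
  right_inv t := by ext a b; simp [Setoid.comap_rel]

private lemma dobinski_natCard_setoid_congr {α β : Type*} (e : α ≃ β) :
    Nat.card (Setoid α) = Nat.card (Setoid β) :=
  Nat.card_congr (dobinskiSetoidCongr e)

private instance dobinskiSetoidFinite {α : Type*} [Finite α] : Finite (Setoid α) :=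
  Finite.of_injective (fun t : Setoid α => t.r)
    fun _ _ h => Setoid.ext fun x y => iff_of_eq (congrFun (congrFun h x) y)

private lemma dobinski_sigmaSetoidExt {α : Type*} {s s' : Finset α} (h : s = s')
    (u : Setoid {x : α // x ∉ s}) (u' : Setoid {x : α // x ∉ s'})
    (H : ∀ (x y : α) (hx : x ∉ s) (hx' : x ∉ s') (hy : y ∉ s) (hy' : y ∉ s'),
      u ⟨x, hx⟩ ⟨y, hy⟩ ↔ u' ⟨x, hx'⟩ ⟨y, hy'⟩) :
    (⟨s, u⟩ : Σ s : Finset α, Setoid {x : α // x ∉ s}) = ⟨s', u'⟩ := by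
  subst h
  refine congrArg (Sigma.mk s) (Setoid.ext fun x y => ?_)
  have := H x.1 y.1 x.2 x.2 y.2 y.2
  simpa using this

private noncomputable def dobinskiOptionSetoidEquiv (α : Type*) [Finite α] :
    Setoid (Option α) ≃ Σ s : Finset α, Setoid {x : α // x ∉ s} where
  toFun t := ⟨(Set.toFinite {a | t.r (some a) none}).toFinset,
    Setoid.comap (fun x => some x.1) t⟩
  invFun p :=
    letI := Classical.decEq α
    Setoid.ker (fun x : Option α =>
      Option.elim x (none : Option (Quotient p.2))
        (fun a => if h : a ∈ p.1 then none else some (Quotient.mk p.2 ⟨a, h⟩)))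
  left_inv t := by
    ext a b
    rw [Setoid.ker_def]
    match a, b with
    | none, none => simpa using t.refl none
    | some a, none =>
        by_cases h : t.r (some a) none <;> simp [h]
    | none, some b =>
        by_cases h : t.r (some b) none <;> simp [h, eq_comm]
        · exact t.symm h
        · exact fun hh => h (t.symm hh)
    | some a, some b =>
        by_cases ha : t.r (some a) none <;> by_cases hb : t.r (some b) none <;>
          simp [ha, hb]
        · exact t.trans ha (t.symm hb)
        · exact fun hh => hb (t.trans (t.symm hh) ha)
        · exact fun hh => ha (t.trans hh hb)
        · exact Quotient.eq
  right_inv := by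
    rintro ⟨s, u⟩
    letI := Classical.decEq α
    have hS : (Set.toFinite {a : α |
        (Setoid.ker (fun x : Option α =>
          Option.elim x (none : Option (Quotient u))
            (fun a => if h : a ∈ s then none else some (Quotient.mk u ⟨a, h⟩)))).r
          (some a) none}).toFinset = s := by
      ext a
      simp only [Set.Finite.mem_toFinset, Set.mem_setOf_eq, Setoid.ker_def, Option.elim]
      by_cases h : a ∈ s <;> simp [h]
    refine dobinski_sigmaSetoidExt hS _ _ fun x y hx hx' hy hy' => ?_
    simp only [Setoid.comap, Function.onFun, Setoid.ker_def, Option.elim, dif_neg hx', dif_neg hy',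
      Option.some_inj, Quotient.eq]

open Finset in
private lemma dobinski_bell_rec (n : ℕ) :
    Nat.card (Setoid (Fin (n + 1)))
      = ∑ i ∈ range (n + 1), n.choose i * Nat.card (Setoid (Fin i)) := by
  classical
  have h1 : Nat.card (Setoid (Fin (n + 1)))
      = Nat.card (Σ s : Finset (Fin n), Setoid {x : Fin n // x ∉ s}) := by
    rw [dobinski_natCard_setoid_congr (finSuccEquiv n)]
    exact Nat.card_congr (dobinskiOptionSetoidEquiv (Fin n))
  have h2 : ∀ s : Finset (Fin n), Nat.card (Setoid {x : Fin n // x ∉ s})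
      = Nat.card (Setoid (Fin (n - s.card))) := by
    intro s
    refine dobinski_natCard_setoid_congr (Fintype.equivFinOfCardEq ?_)
    simp [Fintype.card_subtype_compl]
  have h3 : Nat.card (Σ s : Finset (Fin n), Setoid {x : Fin n // x ∉ s})
      = ∑ s : Finset (Fin n), Nat.card (Setoid {x : Fin n // x ∉ s}) := by
    letI : ∀ s : Finset (Fin n), Fintype (Setoid {x : Fin n // x ∉ s}) :=
      fun s => Fintype.ofFinite _
    simp [Nat.card_eq_fintype_card, Fintype.card_sigma]
  rw [h1, h3]
  simp only [h2]
  rw [← Finset.powerset_univ, Finset.sum_powerset]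
  have h4 : ∀ j ∈ range (n + 1),
      ∑ s ∈ Finset.powersetCard j (univ : Finset (Fin n)),
          Nat.card (Setoid (Fin (n - s.card)))
        = n.choose j * Nat.card (Setoid (Fin (n - j))) := by
    intro j _
    rw [Finset.sum_congr rfl (fun s hs => by
      rw [(Finset.mem_powersetCard.mp hs).2]), Finset.sum_const,
      Finset.card_powersetCard, smul_eq_mul, Finset.card_univ, Fintype.card_fin]
  rw [Finset.card_univ, Fintype.card_fin, Finset.sum_congr rfl h4]
  rw [← Finset.sum_range_reflect]
  refine Finset.sum_congr rfl fun j hj => ?_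
  have hj' : j ≤ n := Nat.lt_succ_iff.mp (mem_range.mp hj)
  rw [Nat.add_sub_cancel, Nat.choose_symm hj', Nat.sub_sub_self hj']

/-- Dobinski's formula: for every natural number `n`, the `n`-th moment of a Poisson
distribution with parameter 1, `e⁻¹ ∑_{k=0}^∞ k^n / k!` (with `0^0 = 1`), equals the number
of partitions of an `n`-element set, i.e. the number of equivalence relations on `Fin n`. -/
theorem dobinski_formula (n : ℕ) :
    (Real.exp 1)⁻¹ * ∑' k : ℕ, (k : ℝ) ^ n / (Nat.factorial k : ℝ)
      = (Nat.card (Setoid (Fin n)) : ℝ) := by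
  induction n using Nat.strong_induction_on with
  | _ n ih =>
    match n with
    | 0 =>
        have h0 : Nat.card (Setoid (Fin 0)) = 1 :=
          Nat.card_eq_one_iff_unique.mpr
            ⟨⟨fun a b => Setoid.ext fun x => x.elim0⟩, ⟨⊥⟩⟩
        have hexp : ∑' k : ℕ, (k : ℝ) ^ 0 / (Nat.factorial k : ℝ) = Real.exp 1 := by
          rw [Real.exp_eq_exp_ℝ, NormedSpace.exp_eq_tsum_div]
          simp
        rw [h0, hexp, inv_mul_cancel₀ (ne_of_gt (Real.exp_pos 1)), Nat.cast_one]
    | (m + 1) =>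
        rw [dobinski_moment_shift m, Finset.mul_sum, dobinski_bell_rec m]
        push_cast
        refine Finset.sum_congr rfl fun i hi => ?_
        rw [← ih i (Finset.mem_range.mp hi)]
        ring
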